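/- arXiv:2507.13342 — 2 statements merged into one kernel-verified Lean document; each statement's English description precedes it below -/
import Mathlib

section
/- Let H ∈ F₂^{m×n} have rank m over F₂, let β > 0 and ω > 0, and let {Ω_j}_{j∈J} be a finite partition of F₂ⁿ into pairwise disjoint subsets. Call Ω_j atypical if p_G(Ω_j ∩ Ξ_ω(β)) < (1/2)·p_G(Ω_j). Then the total Gibbs weight of all atypical parts satisfies Σ_{atypical j} p_G(Ω_j) ≤ 4·exp(−ω²n²/(2m)). -/
open Finset Real

/-- Sum over binary strings of a product factorizes. -/
lemma sum_prod_zmod2 {m : ℕ} (r : Fin m → ZMod 2 → ℝ) :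
    ∑ y : Fin m → ZMod 2, ∏ i, r i (y i) = ∏ i, (r i 0 + r i 1) := by
  rw [← Fintype.prod_sum fun i a => r i a]
  congr 1
  funext i
  have h : (Finset.univ : Finset (ZMod 2)) = {0, 1} := by decide
  rw [h, Finset.sum_insert (by decide), Finset.sum_singleton]

lemma exp_hammingNorm {m : ℕ} (s : ℝ) (y : Fin m → ZMod 2) :
    Real.exp (s * (hammingNorm y : ℝ)) = ∏ i, (if y i = 0 then 1 else Real.exp s) := by
  rw [mul_comm, Real.exp_nat_mul]
  rw [← Finset.prod_filter_mul_prod_filter_not Finset.univ (fun i => y i = 0)]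
  rw [Finset.prod_congr rfl (fun i hi => if_pos (Finset.mem_filter.mp hi).2),
      Finset.prod_congr rfl (fun i hi => if_neg (Finset.mem_filter.mp hi).2)]
  rw [Finset.prod_const, Finset.prod_const, one_pow, one_mul]
  rfl

lemma cast_hammingNorm {m : ℕ} (y : Fin m → ZMod 2) :
    (hammingNorm y : ℝ) = ∑ i, (if y i = 0 then (0:ℝ) else 1) := by
  unfold hammingNorm
  rw [Finset.card_filter]
  push_cast
  exact Finset.sum_congr rfl fun i _ => by split_ifs with h <;> simp [h] <;> tauto

lemma sum_single_weight {m : ℕ} (r g : ZMod 2 → ℝ) (i : Fin m) :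
    ∑ y : Fin m → ZMod 2, g (y i) * ∏ j, r (y j)
      = (g 0 * r 0 + g 1 * r 1) * (r 0 + r 1) ^ (m - 1) := by
  have key : ∀ y : Fin m → ZMod 2, g (y i) * ∏ j, r (y j)
      = ∏ j, (Function.update (fun _ : Fin m => r) i (fun a => g a * r a)) j (y j) := by
    intro y
    rw [← Finset.mul_prod_erase Finset.univ
          (fun j => (Function.update (fun _ : Fin m => r) i (fun a => g a * r a)) j (y j))
          (Finset.mem_univ i),
        ← Finset.mul_prod_erase Finset.univ (fun j => r (y j)) (Finset.mem_univ i),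
        Function.update_self, ← mul_assoc]
    congr 1
    exact Finset.prod_congr rfl fun j hj => by
      rw [Function.update_of_ne (Finset.ne_of_mem_erase hj)]
  simp_rw [key]
  rw [sum_prod_zmod2]
  rw [← Finset.mul_prod_erase Finset.univ _ (Finset.mem_univ i), Function.update_self]
  congr 1
  rw [Finset.prod_congr rfl (fun j hj => by
        rw [Function.update_of_ne (Finset.ne_of_mem_erase hj)]),
      Finset.prod_const, Finset.card_erase_of_mem (Finset.mem_univ i), Finset.card_univ,
      Fintype.card_fin]

lemma sum_exp_hammingNorm {m : ℕ} (s : ℝ) :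
    ∑ y : Fin m → ZMod 2, Real.exp (s * (hammingNorm y : ℝ))
      = (1 + Real.exp s) ^ m := by
  simp_rw [exp_hammingNorm]
  rw [sum_prod_zmod2 (fun _ a => if a = 0 then 1 else Real.exp s)]
  norm_num [Finset.prod_const]

lemma sum_energy_exp_hammingNorm {m : ℕ} (s : ℝ) :
    ∑ y : Fin m → ZMod 2, (hammingNorm y : ℝ) * Real.exp (s * (hammingNorm y : ℝ))
      = m * Real.exp s * (1 + Real.exp s) ^ (m - 1) := by
  have h : ∀ y : Fin m → ZMod 2, (hammingNorm y : ℝ) * Real.exp (s * (hammingNorm y : ℝ))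
      = ∑ i, (if y i = 0 then (0:ℝ) else 1) * ∏ j, (if y j = 0 then 1 else Real.exp s) := by
    intro y
    rw [exp_hammingNorm, cast_hammingNorm, Finset.sum_mul]
  simp_rw [h]
  rw [Finset.sum_comm]
  have h2 : ∀ i : Fin m,
      ∑ y : Fin m → ZMod 2, (if y i = 0 then (0:ℝ) else 1) * ∏ j, (if y j = 0 then 1 else Real.exp s)
        = Real.exp s * (1 + Real.exp s) ^ (m - 1) := by
    intro i
    rw [sum_single_weight (fun a => if a = 0 then 1 else Real.exp s)
        (fun a => if a = 0 then (0:ℝ) else 1) i]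
    norm_num
  simp_rw [h2]
  rw [Finset.sum_const, Finset.card_univ, Fintype.card_fin, nsmul_eq_mul, mul_assoc]

lemma mulVec_surjective_of_rank {m n : ℕ} (H : Matrix (Fin m) (Fin n) (ZMod 2))
    (hrank : H.rank = m) : Function.Surjective H.mulVec := by
  haveI : Fact (Nat.Prime 2) := ⟨Nat.prime_two⟩
  have hr : LinearMap.range H.mulVecLin = ⊤ := by
    apply Submodule.eq_top_of_finrank_eq
    rw [← Matrix.rank, hrank, Module.finrank_fin_fun]
  intro y
  obtain ⟨x, hx⟩ := LinearMap.range_eq_top.mp hr y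
  exact ⟨x, hx⟩

lemma fiber_const {m n : ℕ} (H : Matrix (Fin m) (Fin n) (ZMod 2)) (hrank : H.rank = m) :
    ∃ c : ℕ, 0 < c ∧ ∀ g : (Fin m → ZMod 2) → ℝ,
      ∑ x : Fin n → ZMod 2, g (H.mulVec x) = c * ∑ y : Fin m → ZMod 2, g y := by
  classical
  have hsurj := mulVec_surjective_of_rank H hrank
  set c : ℕ := (Finset.univ.filter fun x : Fin n → ZMod 2 => H.mulVec x = 0).card with hc
  have hcard : ∀ y : Fin m → ZMod 2,
      (Finset.univ.filter fun x : Fin n → ZMod 2 => H.mulVec x = y).card = c := by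
    intro y
    obtain ⟨x0, hx0⟩ := hsurj y
    rw [hc]
    apply Finset.card_bij' (fun x _ => x - x0) (fun x _ => x + x0)
    · intro a ha
      simp only [Finset.mem_filter, Finset.mem_univ, true_and] at ha ⊢
      rw [Matrix.mulVec_sub, ha, hx0, sub_self]
    · intro a ha
      simp only [Finset.mem_filter, Finset.mem_univ, true_and] at ha ⊢
      rw [Matrix.mulVec_add, ha, hx0, zero_add]
    · intro a _; ring
    · intro a _; ring
  refine ⟨c, ?_, ?_⟩
  · rw [hc]
    exact Finset.card_pos.mpr ⟨0, by simp [Matrix.mulVec_zero]⟩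
  · intro g
    rw [← Finset.sum_fiberwise Finset.univ (fun x => H.mulVec x) (fun x => g (H.mulVec x))]
    rw [Finset.mul_sum]
    refine Finset.sum_congr rfl fun y _ => ?_
    have : ∀ x ∈ Finset.univ.filter fun x : Fin n → ZMod 2 => H.mulVec x = y,
        g (H.mulVec x) = g y := fun x hx => by rw [(Finset.mem_filter.mp hx).2]
    rw [Finset.sum_congr rfl this, Finset.sum_const, hcard y, nsmul_eq_mul]

/-- Convexity bound: `e^{λx} ≤ (1+x)/2·e^λ + (1-x)/2·e^{-λ}` for `x ∈ [-1,1]`. -/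
lemma exp_le_convex (l x : ℝ) (hx1 : -1 ≤ x) (hx2 : x ≤ 1) :
    Real.exp (l * x) ≤ (1 + x) / 2 * Real.exp l + (1 - x) / 2 * Real.exp (-l) := by
  have h := convexOn_exp.2 (Set.mem_univ l) (Set.mem_univ (-l))
      (by linarith : (0:ℝ) ≤ (1 + x) / 2) (by linarith : (0:ℝ) ≤ (1 - x) / 2)
      (by ring : (1 + x) / 2 + (1 - x) / 2 = 1)
  have e : (1 + x) / 2 * l + -((1 - x) / 2 * l) = l * x := by ring
  simpa [smul_eq_mul, e] using h

/-- Hoeffding-type bound for a Bernoulli(q) variable. -/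
lemma bernoulli_mgf_bound (q l : ℝ) (hq0 : 0 ≤ q) (hq1 : q ≤ 1) :
    (1 - q) * Real.exp (l * (-q)) + q * Real.exp (l * (1 - q)) ≤ Real.exp (l ^ 2 / 2) := by
  have h1 := exp_le_convex l (-q) (by linarith) (by linarith)
  have h2 := exp_le_convex l (1 - q) (by linarith) (by linarith)
  have hcosh : (Real.exp l + Real.exp (-l)) / 2 ≤ Real.exp (l ^ 2 / 2) := by
    have := Real.cosh_le_exp_half_sq l
    rwa [Real.cosh_eq] at this
  nlinarith [Real.exp_pos l, Real.exp_pos (-l), mul_le_mul_of_nonneg_left h1 (by linarith : (0:ℝ) ≤ 1 - q), mul_le_mul_of_nonneg_left h2 hq0]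

/-- The key one-coordinate inequality. -/
lemma key_coord (β l : ℝ) (hβ : 0 < β) :
    Real.exp (-(l * (Real.exp (-β) / (1 + Real.exp (-β)))))
        * ((1 + Real.exp (l - β)) / (1 + Real.exp (-β)))
      ≤ Real.exp (l ^ 2 / 2) := by
  set c := Real.exp (-β) with hc
  have hc0 : 0 < c := Real.exp_pos _
  set q := c / (1 + c) with hq
  have hq0 : 0 ≤ q := by positivity
  have hq1 : q ≤ 1 := by
    rw [hq, div_le_one (by linarith)]; linarith
  have hsplit : (1 + Real.exp (l - β)) / (1 + c) = (1 - q) + q * Real.exp l := by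
    have : Real.exp (l - β) = Real.exp l * c := by
      rw [hc, ← Real.exp_add]; ring_nf
    rw [this, hq]
    field_simp
    ring
  rw [hsplit]
  have hexpand : Real.exp (-(l * q)) * ((1 - q) + q * Real.exp l)
      = (1 - q) * Real.exp (l * (-q)) + q * Real.exp (l * (1 - q)) := by
    rw [show l * (1 - q) = l + -(l * q) by ring, Real.exp_add,
        show l * (-q) = -(l * q) by ring]
    ring
  rw [hexpand]
  exact bernoulli_mgf_bound q l hq0 hq1

lemma gibbs_tail {m n : ℕ} (hm : 0 < m) (H : Matrix (Fin m) (Fin n) (ZMod 2))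
    (hrank : H.rank = m) (β t : ℝ) (hβ : 0 < β) (ht : 0 ≤ t)
    (Z : ℝ) (hZ : Z = ∑ x : Fin n → ZMod 2, Real.exp (-β * (hammingNorm (H.mulVec x) : ℝ)))
    (pG : (Fin n → ZMod 2) → ℝ)
    (hpG : ∀ x, pG x = Real.exp (-β * (hammingNorm (H.mulVec x) : ℝ)) / Z)
    (Eavg : ℝ) (hE : Eavg = ∑ x : Fin n → ZMod 2, pG x * (hammingNorm (H.mulVec x) : ℝ)) :
    ∑ x ∈ Finset.univ.filter
        (fun x : Fin n → ZMod 2 => ¬ |(hammingNorm (H.mulVec x) : ℝ) - Eavg| ≤ t), pG x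
      ≤ 2 * Real.exp (-(t ^ 2) / (2 * m)) := by
  classical
  obtain ⟨c, hc0, hfib⟩ := fiber_const H hrank
  set f : (Fin n → ZMod 2) → ℝ := fun x => (hammingNorm (H.mulVec x) : ℝ) with hf
  have hcR : (0:ℝ) < c := by exact_mod_cast hc0
  have hb : (0:ℝ) < 1 + Real.exp (-β) := by positivity
  -- value of Z
  have hZval : Z = c * (1 + Real.exp (-β)) ^ m := by
    rw [hZ, hfib (fun y => Real.exp (-β * (hammingNorm y : ℝ))), sum_exp_hammingNorm]
  have hZ0 : (0:ℝ) < Z := by rw [hZval]; positivity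
  have hpG0 : ∀ x, 0 ≤ pG x := fun x => by
    rw [hpG]; positivity
  -- the mean energy
  set q : ℝ := Real.exp (-β) / (1 + Real.exp (-β)) with hq
  have hEval : Eavg = m * q := by
    have h1 : Eavg = (∑ x : Fin n → ZMod 2, (hammingNorm (H.mulVec x) : ℝ) *
        Real.exp (-β * (hammingNorm (H.mulVec x) : ℝ))) / Z := by
      rw [hE, Finset.sum_div]
      exact Finset.sum_congr rfl fun x _ => by rw [hpG]; ring
    have hpow : (1 + Real.exp (-β)) ^ (m - 1) * (1 + Real.exp (-β))
        = (1 + Real.exp (-β)) ^ m := by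
      rw [← pow_succ, Nat.sub_add_cancel hm]
    rw [h1, hfib (fun y => (hammingNorm y : ℝ) * Real.exp (-β * (hammingNorm y : ℝ))),
        sum_energy_exp_hammingNorm, hZval, hq, ← hpow]
    have hne : (1 + Real.exp (-β)) ^ (m - 1) ≠ 0 := by positivity
    field_simp
  -- MGF bound
  have hMGF : ∀ l : ℝ, ∑ x : Fin n → ZMod 2, pG x * Real.exp (l * (f x - Eavg))
      ≤ Real.exp (m * l ^ 2 / 2) := by
    intro l
    have hterm : ∀ x : Fin n → ZMod 2, pG x * Real.exp (l * (f x - Eavg))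
        = Real.exp ((l - β) * f x) * (Real.exp (-(l * Eavg)) / Z) := by
      intro x
      rw [hpG x]
      have h0 : -β * (hammingNorm (H.mulVec x) : ℝ) = -β * f x := rfl
      rw [h0, div_mul_eq_mul_div, ← Real.exp_add,
        show -β * f x + l * (f x - Eavg) = ((l - β) * f x) + -(l * Eavg) by ring,
        Real.exp_add, mul_div_assoc]
    rw [Finset.sum_congr rfl fun x _ => hterm x, ← Finset.sum_mul]
    simp only [hf]
    rw [hfib (fun y => Real.exp ((l - β) * (hammingNorm y : ℝ))), sum_exp_hammingNorm]
    have hA0 : (0:ℝ) ≤ Real.exp (-(l * q)) * ((1 + Real.exp (l - β)) / (1 + Real.exp (-β))) := by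
      positivity
    have heq : (c : ℝ) * (1 + Real.exp (l - β)) ^ m * (Real.exp (-(l * Eavg)) / Z)
        = (Real.exp (-(l * q)) * ((1 + Real.exp (l - β)) / (1 + Real.exp (-β)))) ^ m := by
      rw [hZval, hEval, mul_pow, div_pow]
      rw [show -(l * ((m:ℝ) * q)) = (m:ℕ) * (-(l * q)) by push_cast; ring, Real.exp_nat_mul]
      have h1 : (1 + Real.exp (-β)) ^ m ≠ 0 := by positivity
      field_simp
    rw [heq]
    calc (Real.exp (-(l * q)) * ((1 + Real.exp (l - β)) / (1 + Real.exp (-β)))) ^ m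
        ≤ (Real.exp (l ^ 2 / 2)) ^ m := by
          apply pow_le_pow_left₀ hA0
          exact key_coord β l hβ
      _ = Real.exp (m * l ^ 2 / 2) := by
          rw [← Real.exp_nat_mul]; congr 1; ring
  -- one-sided tail
  have hmne : (m:ℝ) ≠ 0 := Nat.cast_ne_zero.mpr hm.ne'
  have hside : ∀ g : (Fin n → ZMod 2) → ℝ,
      (∑ x' : Fin n → ZMod 2, pG x' * Real.exp ((t/m) * g x') ≤ Real.exp (m * (t/m) ^ 2 / 2)) →
      ∑ x ∈ Finset.univ.filter (fun x => t < g x), pG x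
        ≤ Real.exp (-(t ^ 2) / (2 * m)) := by
    intro g hmgf
    set l : ℝ := t / m with hl
    have hl0 : 0 ≤ l := by positivity
    have step1 : ∑ x ∈ Finset.univ.filter (fun x => t < g x), pG x
        ≤ ∑ x : Fin n → ZMod 2, pG x * Real.exp (l * g x) * Real.exp (-(l * t)) := by
      apply le_trans (Finset.sum_le_sum (fun x hx => ?_))
        (Finset.sum_le_sum_of_subset_of_nonneg (Finset.subset_univ _)
          (fun x _ _ => mul_nonneg (mul_nonneg (hpG0 x) (Real.exp_pos _).le) (Real.exp_pos _).le))
      show pG x ≤ pG x * Real.exp (l * g x) * Real.exp (-(l * t))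
      have hgx : t < g x := (Finset.mem_filter.mp hx).2
      have h1 : (1:ℝ) ≤ Real.exp (l * g x) * Real.exp (-(l * t)) := by
        rw [← Real.exp_add, ← Real.exp_zero]
        apply Real.exp_le_exp.mpr
        nlinarith
      calc pG x = pG x * 1 := by ring
        _ ≤ pG x * (Real.exp (l * g x) * Real.exp (-(l * t))) :=
            mul_le_mul_of_nonneg_left h1 (hpG0 x)
        _ = pG x * Real.exp (l * g x) * Real.exp (-(l * t)) := by ring
    have step4 : Real.exp (m * l ^ 2 / 2) * Real.exp (-(l * t))
        = Real.exp (-(t ^ 2) / (2 * m)) := by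
      rw [← Real.exp_add]
      congr 1
      rw [hl]
      field_simp
      ring
    calc ∑ x ∈ Finset.univ.filter (fun x => t < g x), pG x
        ≤ ∑ x : Fin n → ZMod 2, pG x * Real.exp (l * g x) * Real.exp (-(l * t)) := step1
      _ = (∑ x : Fin n → ZMod 2, pG x * Real.exp (l * g x)) * Real.exp (-(l * t)) := by
          rw [Finset.sum_mul]
      _ ≤ Real.exp (m * l ^ 2 / 2) * Real.exp (-(l * t)) :=
          mul_le_mul_of_nonneg_right hmgf (Real.exp_pos _).le
      _ = Real.exp (-(t ^ 2) / (2 * m)) := step4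
  -- the two tails
  have hup : ∑ x ∈ Finset.univ.filter (fun x => t < f x - Eavg), pG x
      ≤ Real.exp (-(t ^ 2) / (2 * m)) :=
    hside (fun x => f x - Eavg) (hMGF (t/m))
  have hlo : ∑ x ∈ Finset.univ.filter (fun x => t < Eavg - f x), pG x
      ≤ Real.exp (-(t ^ 2) / (2 * m)) := by
    apply hside (fun x => Eavg - f x)
    calc ∑ x' : Fin n → ZMod 2, pG x' * Real.exp (t / ↑m * (Eavg - f x'))
        = ∑ x' : Fin n → ZMod 2, pG x' * Real.exp ((-(t/m)) * (f x' - Eavg)) := by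
          apply Finset.sum_congr rfl
          intro x _
          congr 2
          ring
      _ ≤ Real.exp (m * (-(t/m)) ^ 2 / 2) := hMGF (-(t/m))
      _ = Real.exp (m * (t/m) ^ 2 / 2) := by congr 1; ring
  -- combine
  have hsub : (Finset.univ.filter (fun x : Fin n → ZMod 2 => ¬ |f x - Eavg| ≤ t))
      ⊆ (Finset.univ.filter (fun x => t < f x - Eavg))
        ∪ (Finset.univ.filter (fun x => t < Eavg - f x)) := by
    intro x hx
    simp only [Finset.mem_filter, Finset.mem_univ, true_and, not_le, Finset.mem_union] at hx ⊢
    rcases lt_abs.mp hx with h | h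
    · left; exact h
    · right; linarith
  have hdisj2 : Disjoint (Finset.univ.filter (fun x : Fin n → ZMod 2 => t < f x - Eavg))
      (Finset.univ.filter (fun x => t < Eavg - f x)) := by
    rw [Finset.disjoint_left]
    intro x h1 h2
    simp only [Finset.mem_filter, Finset.mem_univ, true_and] at h1 h2
    linarith
  calc ∑ x ∈ Finset.univ.filter (fun x : Fin n → ZMod 2 => ¬ |f x - Eavg| ≤ t), pG x
      ≤ ∑ x ∈ (Finset.univ.filter (fun x : Fin n → ZMod 2 => t < f x - Eavg))
          ∪ (Finset.univ.filter (fun x => t < Eavg - f x)), pG x :=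
        Finset.sum_le_sum_of_subset_of_nonneg hsub (fun x _ _ => hpG0 x)
    _ = (∑ x ∈ Finset.univ.filter (fun x : Fin n → ZMod 2 => t < f x - Eavg), pG x)
        + ∑ x ∈ Finset.univ.filter (fun x => t < Eavg - f x), pG x :=
        Finset.sum_union hdisj2
    _ ≤ Real.exp (-(t ^ 2) / (2 * m)) + Real.exp (-(t ^ 2) / (2 * m)) := add_le_add hup hlo
    _ = 2 * Real.exp (-(t ^ 2) / (2 * m)) := by ring

/-- for `H ∈ F₂^{m×n}` of rank `m`, `β, ω > 0`, and a finite
partition `{Ω_j}` of `F₂ⁿ` into pairwise disjoint subsets, the total Gibbs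
weight of all atypical parts — those with
`p_G(Ω_j ∩ Ξ_ω(β)) < p_G(Ω_j)/2` — is at most `4·exp(−ω²n²/(2m))`. -/
theorem atypical_parts_small_weight {m n : ℕ} (H : Matrix (Fin m) (Fin n) (ZMod 2))
    (hrank : H.rank = m) (β ω : ℝ) (hβ : 0 < β) (hω : 0 < ω)
    {J : Type*} [Fintype J] (Ω : J → Finset (Fin n → ZMod 2))
    (hdisj : ∀ j k : J, j ≠ k → Disjoint (Ω j) (Ω k))
    (hcover : ∀ x : Fin n → ZMod 2, ∃ j : J, x ∈ Ω j) :
    let Z : ℝ := ∑ x : Fin n → ZMod 2, Real.exp (-β * (hammingNorm (H.mulVec x) : ℝ))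
    let pG : (Fin n → ZMod 2) → ℝ := fun x =>
      Real.exp (-β * (hammingNorm (H.mulVec x) : ℝ)) / Z
    let Eavg : ℝ := ∑ x : Fin n → ZMod 2, pG x * (hammingNorm (H.mulVec x) : ℝ)
    let Ξ : Finset (Fin n → ZMod 2) := Finset.univ.filter
      (fun x : Fin n → ZMod 2 => |(hammingNorm (H.mulVec x) : ℝ) - Eavg| ≤ ω * n)
    ∑ j ∈ Finset.univ.filter
        (fun j : J => ∑ x ∈ Ω j ∩ Ξ, pG x < (∑ x ∈ Ω j, pG x) / 2),
      ∑ x ∈ Ω j, pG x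
    ≤ 4 * Real.exp (-(ω ^ 2 * (n : ℝ) ^ 2) / (2 * m)) := by
  classical
  intro Z pG Eavg Ξ
  have hZ0 : (0:ℝ) < Z := by
    apply Finset.sum_pos (fun x _ => Real.exp_pos _) Finset.univ_nonempty
  have hpG0 : ∀ x, 0 ≤ pG x := fun x => div_nonneg (Real.exp_pos _).le hZ0.le
  rcases Nat.eq_zero_or_pos m with hm0 | hm
  · -- m = 0 : the shell is everything, no part is atypical
    have hfzero : ∀ x : Fin n → ZMod 2, (hammingNorm (H.mulVec x) : ℝ) = 0 := by
      intro x
      subst hm0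
      have : hammingNorm (H.mulVec x) = 0 := by
        refine Nat.le_antisymm ?_ (Nat.zero_le _)
        calc hammingNorm (H.mulVec x) ≤ Fintype.card (Fin 0) :=
              le_trans (Finset.card_filter_le _ _) (by simp)
          _ = 0 := by simp
      rw [this, Nat.cast_zero]
    have hEavg0 : Eavg = 0 := by
      show (∑ x : Fin n → ZMod 2, pG x * (hammingNorm (H.mulVec x) : ℝ)) = 0
      apply Finset.sum_eq_zero
      intro x _
      rw [hfzero x, mul_zero]
    have hXi : Ξ = Finset.univ := by
      show Finset.univ.filter _ = Finset.univ
      apply Finset.filter_true_of_mem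
      intro x _
      rw [hfzero x, hEavg0, sub_zero, abs_zero]
      positivity
    have hempty : Finset.univ.filter
        (fun j : J => ∑ x ∈ Ω j ∩ Ξ, pG x < (∑ x ∈ Ω j, pG x) / 2) = ∅ := by
      apply Finset.filter_false_of_mem
      intro j _
      rw [hXi, Finset.inter_univ]
      have h0 : 0 ≤ ∑ x ∈ Ω j, pG x := Finset.sum_nonneg fun x _ => hpG0 x
      linarith
    rw [hempty, Finset.sum_empty]
    positivity
  · -- m > 0 : use the tail bound
    set t : ℝ := ω * n with hts
    have ht : 0 ≤ t := by positivity
    have htail := gibbs_tail hm H hrank β t hβ ht Z rfl pG (fun x => rfl) Eavg rfl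
    have hXic : Finset.univ \ Ξ = Finset.univ.filter
        (fun x : Fin n → ZMod 2 => ¬ |(hammingNorm (H.mulVec x) : ℝ) - Eavg| ≤ t) := by
      rw [Finset.filter_not]
    -- each atypical part has at most twice its weight outside the shell
    have hpart : ∀ j ∈ Finset.univ.filter
        (fun j : J => ∑ x ∈ Ω j ∩ Ξ, pG x < (∑ x ∈ Ω j, pG x) / 2),
        ∑ x ∈ Ω j, pG x ≤ 2 * ∑ x ∈ Ω j \ Ξ, pG x := by
      intro j hj
      have hlt := (Finset.mem_filter.mp hj).2
      have hsplit : (∑ x ∈ Ω j ∩ Ξ, pG x) + ∑ x ∈ Ω j \ Ξ, pG x = ∑ x ∈ Ω j, pG x :=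
        Finset.sum_inter_add_sum_sdiff (Ω j) Ξ pG
      linarith
    calc ∑ j ∈ Finset.univ.filter
          (fun j : J => ∑ x ∈ Ω j ∩ Ξ, pG x < (∑ x ∈ Ω j, pG x) / 2), ∑ x ∈ Ω j, pG x
        ≤ ∑ j ∈ Finset.univ.filter
          (fun j : J => ∑ x ∈ Ω j ∩ Ξ, pG x < (∑ x ∈ Ω j, pG x) / 2),
            2 * ∑ x ∈ Ω j \ Ξ, pG x := Finset.sum_le_sum hpart
      _ ≤ ∑ j : J, 2 * ∑ x ∈ Ω j \ Ξ, pG x := by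
          apply Finset.sum_le_sum_of_subset_of_nonneg (Finset.filter_subset _ _)
          intro j _ _
          have : 0 ≤ ∑ x ∈ Ω j \ Ξ, pG x := Finset.sum_nonneg fun x _ => hpG0 x
          linarith
      _ = 2 * ∑ j : J, ∑ x ∈ Ω j \ Ξ, pG x := by rw [Finset.mul_sum]
      _ = 2 * ∑ x ∈ Finset.univ.biUnion (fun j : J => Ω j \ Ξ), pG x := by
          congr 1
          rw [Finset.sum_biUnion]
          intro j _ k _ hjk
          exact Finset.disjoint_of_subset_left (Finset.sdiff_subset)
            (Finset.disjoint_of_subset_right (Finset.sdiff_subset) (hdisj j k hjk))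
      _ ≤ 2 * ∑ x ∈ Finset.univ \ Ξ, pG x := by
          apply mul_le_mul_of_nonneg_left _ (by norm_num : (0:ℝ) ≤ 2)
          apply Finset.sum_le_sum_of_subset_of_nonneg _ (fun x _ _ => hpG0 x)
          intro x hx
          obtain ⟨j, hj, hxj⟩ := Finset.mem_biUnion.mp hx
          rw [Finset.mem_sdiff] at hxj ⊢
          exact ⟨Finset.mem_univ x, hxj.2⟩
      _ ≤ 2 * (2 * Real.exp (-(t ^ 2) / (2 * m))) := by
          apply mul_le_mul_of_nonneg_left _ (by norm_num : (0:ℝ) ≤ 2)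
          rw [hXic]
          exact htail
      _ = 4 * Real.exp (-(ω ^ 2 * (n : ℝ) ^ 2) / (2 * m)) := by
          rw [hts]
          ring_nf
end

section
/- Let H ∈ F₂^{m×n} be (δ,γ)-expanding, let 0 < ε < δγ/2 and 0 < ξ < (δ − 2ε/γ)/2. Then every ξ-cluster C of Ω(ε) satisfies |C| ≤ Σ_{i=0}^{⌊2εn/γ⌋} binom(n,i), i.e. the cardinality of each cluster is at most the volume of a Hamming ball of radius ⌊2εn/γ⌋ in F₂ⁿ. -/
open scoped Classical

/-- A binary matrix `H ∈ F₂^{m×n}` is `(δ,γ)`-expanding if every `x ∈ F₂ⁿ`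
with Hamming weight `|x| ≤ δn` satisfies `|Hx| ≥ γ|x|`. -/
def IsExpanding {m n : ℕ} (H : Matrix (Fin m) (Fin n) (ZMod 2)) (δ γ : ℝ) : Prop :=
  ∀ x : Fin n → ZMod 2, (hammingNorm x : ℝ) ≤ δ * n →
    γ * (hammingNorm x : ℝ) ≤ (hammingNorm (H.mulVec x) : ℝ)

/-- `x ∼ y` on `Ω(ε) = {z : |Hz| < εn}`: there is a path `v₀ = x, …, v_ℓ = y`
inside `Ω(ε)` whose consecutive members differ in fewer than `ξn` coordinates.
Its equivalence classes are the ξ-clusters of `Ω(ε)`. -/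
def Connected {m n : ℕ} (H : Matrix (Fin m) (Fin n) (ZMod 2)) (ε ξ : ℝ)
    (x y : Fin n → ZMod 2) : Prop :=
  ∃ (ℓ : ℕ) (v : ℕ → Fin n → ZMod 2), v 0 = x ∧ v ℓ = y ∧
    (∀ i ≤ ℓ, (hammingNorm (H.mulVec (v i)) : ℝ) < ε * n) ∧
    (∀ i < ℓ, (hammingNorm (v i + v (i + 1)) : ℝ) < ξ * n)

lemma hn_add_le {n : ℕ} (a b : Fin n → ZMod 2) :
    hammingNorm (a + b) ≤ hammingNorm a + hammingNorm b := by
  classical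
  unfold hammingNorm
  refine le_trans (Finset.card_le_card ?_) (Finset.card_union_le _ _)
  intro i hi
  simp only [Finset.mem_filter, Finset.mem_union, Finset.mem_univ, true_and,
    Pi.add_apply] at hi ⊢
  by_contra hc
  push_neg at hc
  rw [hc.1, hc.2, add_zero] at hi
  exact hi rfl

lemma weight_card {n : ℕ} (i : ℕ) :
    (Finset.univ.filter (fun z : Fin n → ZMod 2 => hammingNorm z = i)).card
      = n.choose i := by
  classical
  have key : ∀ a : ZMod 2, a ≠ 0 → a = 1 := by decide
  rw [show n.choose i = ((Finset.univ : Finset (Fin n)).powersetCard i).card by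
    rw [Finset.card_powersetCard, Finset.card_fin]]
  refine Finset.card_bij' (fun z _ => Finset.univ.filter (fun j => z j ≠ 0))
    (fun s _ => fun j => if j ∈ s then 1 else 0) ?_ ?_ ?_ ?_
  · intro z hz
    simp only [Finset.mem_filter, Finset.mem_univ, true_and] at hz
    rw [Finset.mem_powersetCard]
    exact ⟨Finset.filter_subset _ _, hz⟩
  · intro s hs
    rw [Finset.mem_powersetCard] at hs
    simp only [Finset.mem_filter, Finset.mem_univ, true_and]
    rw [← hs.2]
    unfold hammingNorm
    congr 1
    ext j
    simp only [Finset.mem_filter, Finset.mem_univ, true_and]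
    by_cases h : j ∈ s <;> simp [h]
  · intro z hz
    funext j
    by_cases h : z j = 0
    · simp [h]
    · simp [h, key _ h]
  · intro s hs
    ext j
    by_cases h : j ∈ s <;> simp [h]

lemma ball_card {n : ℕ} (r : ℕ) :
    (Finset.univ.filter (fun z : Fin n → ZMod 2 => hammingNorm z ≤ r)).card
      = ∑ i ∈ Finset.range (r + 1), Nat.choose n i := by
  classical
  have hsplit : (Finset.univ.filter (fun z : Fin n → ZMod 2 => hammingNorm z ≤ r))
      = (Finset.range (r+1)).biUnion
        (fun i => Finset.univ.filter (fun z : Fin n → ZMod 2 => hammingNorm z = i)) := by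
    ext z
    simp [Nat.lt_succ_iff]
  rw [hsplit, Finset.card_biUnion]
  · exact Finset.sum_congr rfl fun i _ => weight_card i
  · intro a _ b _ hab
    simp only [Finset.disjoint_left, Finset.mem_filter]
    rintro z ⟨_, h1⟩ ⟨_, h2⟩
    exact hab (h1 ▸ h2 ▸ rfl)

/-- for `(δ,γ)`-expanding `H`, `0 < ε < δγ/2` and
`0 < ξ < (δ − 2ε/γ)/2`, every ξ-cluster of `Ω(ε)` has cardinality at most the
volume `Σ_{i=0}^{⌊2εn/γ⌋} C(n,i)` of a Hamming ball of radius `⌊2εn/γ⌋`. -/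
theorem cluster_cardinality_bound {m n : ℕ} (H : Matrix (Fin m) (Fin n) (ZMod 2))
    (δ γ ε ξ : ℝ) (hδ : 0 < δ) (hγ : 0 < γ) (hexp : IsExpanding H δ γ)
    (hε0 : 0 < ε) (hε : ε < δ * γ / 2)
    (hξ0 : 0 < ξ) (hξ : ξ < (δ - 2 * ε / γ) / 2)
    (x : Fin n → ZMod 2) (hx : (hammingNorm (H.mulVec x) : ℝ) < ε * n) :
    (Finset.univ.filter (fun y : Fin n → ZMod 2 => Connected H ε ξ x y)).card
      ≤ ∑ i ∈ Finset.range (⌊2 * ε * (n : ℝ) / γ⌋₊ + 1), Nat.choose n i := by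
  classical
  set B : ℝ := 2 * ε * (n : ℝ) / γ with hB
  have hn0 : (0 : ℝ) ≤ (n : ℝ) := Nat.cast_nonneg n
  -- key: every connected y satisfies |x + y| ≤ B
  have key : ∀ y, Connected H ε ξ x y → (hammingNorm (x + y) : ℝ) ≤ B := by
    rintro y ⟨ℓ, v, hv0, hvℓ, hΩ, hstep⟩
    have main : ∀ i ≤ ℓ, (hammingNorm (x + v i) : ℝ) ≤ B := by
      intro i
      induction i with
      | zero =>
        intro _
        rw [hv0]
        have : x + x = 0 := by
          funext j; simp [CharTwo.add_self_eq_zero]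
        rw [this, hammingNorm_zero]
        rw [Nat.cast_zero, hB]
        positivity
      | succ i ih =>
        intro hi
        have hi' : i ≤ ℓ := le_of_lt (Nat.lt_of_succ_le hi)
        have hprev := ih hi'
        set w := x + v (i + 1) with hw
        have hweq : w = (x + v i) + (v i + v (i + 1)) := by
          funext j
          simp only [Pi.add_apply]
          rw [show x j + v i j + (v i j + v (i+1) j)
              = x j + (v i j + v i j + v (i+1) j) by ring,
            show v i j + v i j = (0 : ZMod 2) from CharTwo.add_self_eq_zero _, zero_add]
          rfl
        have hwle : (hammingNorm w : ℝ)
            ≤ (hammingNorm (x + v i) : ℝ) + (hammingNorm (v i + v (i+1)) : ℝ) := by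
          rw [hweq]
          exact_mod_cast hn_add_le _ _
        have hstepi := hstep i (Nat.lt_of_succ_le hi)
        have hwδ : (hammingNorm w : ℝ) ≤ δ * n := by
          have h1 : (hammingNorm w : ℝ) < B + ξ * n := by linarith
          have h2 : B + ξ * n ≤ δ * n := by
            have : B = (2 * ε / γ) * n := by rw [hB]; ring
            nlinarith [mul_le_mul_of_nonneg_right (le_of_lt hξ) hn0,
              mul_pos hγ (mul_pos hε0 hγ)]
          linarith
        have hexpw := hexp w hwδ
        have hHw : (hammingNorm (H.mulVec w) : ℝ) < 2 * ε * n := by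
          have hweq2 : H.mulVec w = H.mulVec x + H.mulVec (v (i+1)) := by
            rw [hw, Matrix.mulVec_add]
          have := hn_add_le (H.mulVec x) (H.mulVec (v (i+1)))
          have hcast : (hammingNorm (H.mulVec w) : ℝ)
              ≤ (hammingNorm (H.mulVec x) : ℝ) + (hammingNorm (H.mulVec (v (i+1))) : ℝ) := by
            rw [hweq2]; exact_mod_cast this
          have := hΩ (i+1) hi
          linarith
        have : γ * (hammingNorm w : ℝ) < 2 * ε * n := lt_of_le_of_lt hexpw hHw
        rw [hB]
        rw [le_div_iff₀ hγ]
        linarith [this]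
    have := main ℓ le_rfl
    rwa [hvℓ] at this
  rw [← ball_card]
  have hsub : (Finset.univ.filter (fun y : Fin n → ZMod 2 => Connected H ε ξ x y)).card
      ≤ (Finset.univ.filter
        (fun y : Fin n → ZMod 2 => hammingNorm (x + y) ≤ ⌊B⌋₊)).card := by
    refine Finset.card_le_card ?_
    intro y hy
    simp only [Finset.mem_filter, Finset.mem_univ, true_and] at hy ⊢
    exact Nat.le_floor (key y hy)
  refine le_trans hsub (le_of_eq ?_)
  refine Finset.card_bij' (fun y _ => x + y) (fun z _ => x + z) ?_ ?_ ?_ ?_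
  · intro y hy
    simp only [Finset.mem_filter, Finset.mem_univ, true_and] at hy ⊢
    exact hy
  · intro z hz
    simp only [Finset.mem_filter, Finset.mem_univ, true_and] at hz ⊢
    have : x + (x + z) = z := by
      funext j; simp only [Pi.add_apply]
      rw [← add_assoc, CharTwo.add_self_eq_zero, zero_add]
    rwa [this]
  · intro y _
    funext j; simp only [Pi.add_apply]
    rw [← add_assoc, CharTwo.add_self_eq_zero, zero_add]
  · intro z _
    funext j; simp only [Pi.add_apply]
    rw [← add_assoc, CharTwo.add_self_eq_zero, zero_add]
end
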